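/- For Markovian SI dynamics with infection rate τ > 0 on the closed triangle, started from the pure initial configuration (I, S, S), the one-step maximum-entropy closure is exact: for all A, B, C ∈ Fin 2 and all t > 0, P_{123}(A,B,C;t) = P_{12}(A,B;t) · P_{23}(B,C;t) · P_{13}(A,C;t) / ( P_2(B;t) · ∑_{b ∈ Fin 2} P_{12}(A,b;t) · P_{23}(b,C;t) / P_2(b;t) ), where real division follows Lean's convention x/0 = 0. -/

import Mathlib

set_option maxRecDepth 100000
set_option linter.unreachableTactic false
set_option linter.unusedTactic false


open Finset

/-- Rate of a single off-diagonal transition for the Markovian SI model with states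
`0 = S`, `1 = I`: nonzero only if `y` agrees with `x` except at exactly one node `i`,
where `S → I` occurs at rate `τ · #infectious neighbours`. -/
noncomputable def siRate {V : Type*} [Fintype V] [DecidableEq V] (G : SimpleGraph V)
    [DecidableRel G.Adj] (τ : ℝ) (x y : V → Fin 2) : ℝ :=
  ∑ i : V,
    (if (∀ j, j ≠ i → x j = y j) ∧ x i = 0 ∧ y i = 1 then
        τ * ((Finset.univ.filter (fun j => G.Adj i j ∧ x j = 1)).card : ℝ) else 0)

/-- Generator matrix of the Markovian SI dynamics on configurations `V → Fin 2`. -/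
noncomputable def siGen {V : Type*} [Fintype V] [DecidableEq V] (G : SimpleGraph V)
    [DecidableRel G.Adj] (τ : ℝ) : Matrix (V → Fin 2) (V → Fin 2) ℝ :=
  fun x y => if x = y then -∑ z ∈ Finset.univ.erase x, siRate G τ x z
             else siRate G τ x y

/-- Distribution at time `t` started from the pure configuration `x0`. -/
noncomputable def siP {V : Type*} [Fintype V] [DecidableEq V] (G : SimpleGraph V)
    [DecidableRel G.Adj] (τ : ℝ) (x0 : V → Fin 2) (t : ℝ) (x : V → Fin 2) : ℝ :=
  NormedSpace.exp (t • siGen G τ) x0 x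

/-- Single-node marginal `P_i(A;t)`. -/
noncomputable def siP1 {V : Type*} [Fintype V] [DecidableEq V] (G : SimpleGraph V)
    [DecidableRel G.Adj] (τ : ℝ) (x0 : V → Fin 2) (i : V) (A : Fin 2) (t : ℝ) : ℝ :=
  ∑ x ∈ Finset.univ.filter (fun x : V → Fin 2 => x i = A), siP G τ x0 t x

/-- Pair marginal `P_{ij}(A,B;t)`. -/
noncomputable def siP2 {V : Type*} [Fintype V] [DecidableEq V] (G : SimpleGraph V)
    [DecidableRel G.Adj] (τ : ℝ) (x0 : V → Fin 2) (i j : V) (A B : Fin 2) (t : ℝ) : ℝ :=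
  ∑ x ∈ Finset.univ.filter (fun x : V → Fin 2 => x i = A ∧ x j = B), siP G τ x0 t x

/-- Triple marginal `P_{ijk}(A,B,C;t)`. -/
noncomputable def siP3 {V : Type*} [Fintype V] [DecidableEq V] (G : SimpleGraph V)
    [DecidableRel G.Adj] (τ : ℝ) (x0 : V → Fin 2) (i j k : V) (A B C : Fin 2) (t : ℝ) : ℝ :=
  ∑ x ∈ Finset.univ.filter (fun x : V → Fin 2 => x i = A ∧ x j = B ∧ x k = C),
    siP G τ x0 t x

/-- The closed triangle: the complete graph on nodes `{0,1,2}` (representing `1,2,3`). -/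
def triangle : SimpleGraph (Fin 3) := ⊤

instance : DecidableRel triangle.Adj :=
  fun i j => inferInstanceAs (Decidable (i ≠ j))

lemma cfg_cases (x : Fin 3 → Fin 2) : x = ![0,0,0] ∨ x = ![1,0,0] ∨ x = ![0,1,0] ∨ x = ![1,1,0]
    ∨ x = ![0,0,1] ∨ x = ![1,0,1] ∨ x = ![0,1,1] ∨ x = ![1,1,1] := by
  revert x; decide

lemma sum_cfg (f : (Fin 3 → Fin 2) → ℝ) : ∑ x, f x
    = f ![0,0,0] + f ![1,0,0] + f ![0,1,0] + f ![1,1,0]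
      + f ![0,0,1] + f ![1,0,1] + f ![0,1,1] + f ![1,1,1] := by
  rw [show (univ : Finset (Fin 3 → Fin 2)) =
      {![0,0,0], ![1,0,0], ![0,1,0], ![1,1,0], ![0,0,1], ![1,0,1], ![0,1,1], ![1,1,1]} from by
    decide]
  simp (config := { decide := true }) only [Finset.sum_insert, Finset.mem_insert,
    Finset.mem_singleton, Finset.sum_singleton, not_false_iff, or_self, or_false, false_or]
  ring

noncomputable def Rm (τ : ℝ) : Matrix (Fin 3 → Fin 2) (Fin 3 → Fin 2) ℝ :=
  siGen triangle τ + (2*τ) • 1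

noncomputable def dd (y z : Fin 3 → Fin 2) : ℝ := if y = z then 1 else 0

lemma Rm_row0 (τ : ℝ) (y : Fin 3 → Fin 2) :
    Rm τ ![0,0,0] y = 2*τ * dd y ![0,0,0] := by
  rcases cfg_cases y with rfl|rfl|rfl|rfl|rfl|rfl|rfl|rfl <;>
  · simp only [Rm, dd, Matrix.add_apply, Matrix.smul_apply, Matrix.one_apply, siGen,
      Finset.sum_erase_eq_sub (Finset.mem_univ _), sum_cfg]
    simp (config := { decide := true }) only [siRate, Fin.sum_univ_three, Finset.card_filter,
      if_true, if_false]
    norm_num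
    try ring

lemma Rm_row1 (τ : ℝ) (y : Fin 3 → Fin 2) :
    Rm τ ![1,0,0] y = τ * dd y ![1,1,0] + τ * dd y ![1,0,1] := by
  rcases cfg_cases y with rfl|rfl|rfl|rfl|rfl|rfl|rfl|rfl <;>
  · simp only [Rm, dd, Matrix.add_apply, Matrix.smul_apply, Matrix.one_apply, siGen,
      Finset.sum_erase_eq_sub (Finset.mem_univ _), sum_cfg]
    simp (config := { decide := true }) only [siRate, Fin.sum_univ_three, Finset.card_filter,
      if_true, if_false]
    norm_num
    try ring

lemma Rm_row2 (τ : ℝ) (y : Fin 3 → Fin 2) :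
    Rm τ ![0,1,0] y = τ * dd y ![1,1,0] + τ * dd y ![0,1,1] := by
  rcases cfg_cases y with rfl|rfl|rfl|rfl|rfl|rfl|rfl|rfl <;>
  · simp only [Rm, dd, Matrix.add_apply, Matrix.smul_apply, Matrix.one_apply, siGen,
      Finset.sum_erase_eq_sub (Finset.mem_univ _), sum_cfg]
    simp (config := { decide := true }) only [siRate, Fin.sum_univ_three, Finset.card_filter,
      if_true, if_false]
    norm_num
    try ring

lemma Rm_row3 (τ : ℝ) (y : Fin 3 → Fin 2) :
    Rm τ ![1,1,0] y = 2*τ * dd y ![1,1,1] := by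
  rcases cfg_cases y with rfl|rfl|rfl|rfl|rfl|rfl|rfl|rfl <;>
  · simp only [Rm, dd, Matrix.add_apply, Matrix.smul_apply, Matrix.one_apply, siGen,
      Finset.sum_erase_eq_sub (Finset.mem_univ _), sum_cfg]
    simp (config := { decide := true }) only [siRate, Fin.sum_univ_three, Finset.card_filter,
      if_true, if_false]
    norm_num
    try ring

lemma Rm_row4 (τ : ℝ) (y : Fin 3 → Fin 2) :
    Rm τ ![0,0,1] y = τ * dd y ![1,0,1] + τ * dd y ![0,1,1] := by
  rcases cfg_cases y with rfl|rfl|rfl|rfl|rfl|rfl|rfl|rfl <;>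
  · simp only [Rm, dd, Matrix.add_apply, Matrix.smul_apply, Matrix.one_apply, siGen,
      Finset.sum_erase_eq_sub (Finset.mem_univ _), sum_cfg]
    simp (config := { decide := true }) only [siRate, Fin.sum_univ_three, Finset.card_filter,
      if_true, if_false]
    norm_num
    try ring

lemma Rm_row5 (τ : ℝ) (y : Fin 3 → Fin 2) :
    Rm τ ![1,0,1] y = 2*τ * dd y ![1,1,1] := by
  rcases cfg_cases y with rfl|rfl|rfl|rfl|rfl|rfl|rfl|rfl <;>
  · simp only [Rm, dd, Matrix.add_apply, Matrix.smul_apply, Matrix.one_apply, siGen,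
      Finset.sum_erase_eq_sub (Finset.mem_univ _), sum_cfg]
    simp (config := { decide := true }) only [siRate, Fin.sum_univ_three, Finset.card_filter,
      if_true, if_false]
    norm_num
    try ring

lemma Rm_row6 (τ : ℝ) (y : Fin 3 → Fin 2) :
    Rm τ ![0,1,1] y = 2*τ * dd y ![1,1,1] := by
  rcases cfg_cases y with rfl|rfl|rfl|rfl|rfl|rfl|rfl|rfl <;>
  · simp only [Rm, dd, Matrix.add_apply, Matrix.smul_apply, Matrix.one_apply, siGen,
      Finset.sum_erase_eq_sub (Finset.mem_univ _), sum_cfg]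
    simp (config := { decide := true }) only [siRate, Fin.sum_univ_three, Finset.card_filter,
      if_true, if_false]
    norm_num
    try ring

lemma Rm_row7 (τ : ℝ) (y : Fin 3 → Fin 2) :
    Rm τ ![1,1,1] y = 2*τ * dd y ![1,1,1] := by
  rcases cfg_cases y with rfl|rfl|rfl|rfl|rfl|rfl|rfl|rfl <;>
  · simp only [Rm, dd, Matrix.add_apply, Matrix.smul_apply, Matrix.one_apply, siGen,
      Finset.sum_erase_eq_sub (Finset.mem_univ _), sum_cfg]
    simp (config := { decide := true }) only [siRate, Fin.sum_univ_three, Finset.card_filter,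
      if_true, if_false]
    norm_num
    try ring

lemma Rm2_row0 (τ : ℝ) (y : Fin 3 → Fin 2) :
    (Rm τ * Rm τ) ![0,0,0] y = 4*τ^2 * dd y ![0,0,0] := by
  rw [Matrix.mul_apply, sum_cfg]
  simp only [Rm_row0, Rm_row1, Rm_row2, Rm_row3, Rm_row4, Rm_row5, Rm_row6, Rm_row7]
  simp (config := { decide := true }) only [dd, if_true, if_false]
  ring

lemma Rm2_row1 (τ : ℝ) (y : Fin 3 → Fin 2) :
    (Rm τ * Rm τ) ![1,0,0] y = 4*τ^2 * dd y ![1,1,1] := by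
  rw [Matrix.mul_apply, sum_cfg]
  simp only [Rm_row0, Rm_row1, Rm_row2, Rm_row3, Rm_row4, Rm_row5, Rm_row6, Rm_row7]
  simp (config := { decide := true }) only [dd, if_true, if_false]
  ring

lemma Rm2_row2 (τ : ℝ) (y : Fin 3 → Fin 2) :
    (Rm τ * Rm τ) ![0,1,0] y = 4*τ^2 * dd y ![1,1,1] := by
  rw [Matrix.mul_apply, sum_cfg]
  simp only [Rm_row0, Rm_row1, Rm_row2, Rm_row3, Rm_row4, Rm_row5, Rm_row6, Rm_row7]
  simp (config := { decide := true }) only [dd, if_true, if_false]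
  ring

lemma Rm2_row3 (τ : ℝ) (y : Fin 3 → Fin 2) :
    (Rm τ * Rm τ) ![1,1,0] y = 4*τ^2 * dd y ![1,1,1] := by
  rw [Matrix.mul_apply, sum_cfg]
  simp only [Rm_row0, Rm_row1, Rm_row2, Rm_row3, Rm_row4, Rm_row5, Rm_row6, Rm_row7]
  simp (config := { decide := true }) only [dd, if_true, if_false]
  ring

lemma Rm2_row4 (τ : ℝ) (y : Fin 3 → Fin 2) :
    (Rm τ * Rm τ) ![0,0,1] y = 4*τ^2 * dd y ![1,1,1] := by
  rw [Matrix.mul_apply, sum_cfg]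
  simp only [Rm_row0, Rm_row1, Rm_row2, Rm_row3, Rm_row4, Rm_row5, Rm_row6, Rm_row7]
  simp (config := { decide := true }) only [dd, if_true, if_false]
  ring

lemma Rm2_row5 (τ : ℝ) (y : Fin 3 → Fin 2) :
    (Rm τ * Rm τ) ![1,0,1] y = 4*τ^2 * dd y ![1,1,1] := by
  rw [Matrix.mul_apply, sum_cfg]
  simp only [Rm_row0, Rm_row1, Rm_row2, Rm_row3, Rm_row4, Rm_row5, Rm_row6, Rm_row7]
  simp (config := { decide := true }) only [dd, if_true, if_false]
  ring

lemma Rm2_row6 (τ : ℝ) (y : Fin 3 → Fin 2) :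
    (Rm τ * Rm τ) ![0,1,1] y = 4*τ^2 * dd y ![1,1,1] := by
  rw [Matrix.mul_apply, sum_cfg]
  simp only [Rm_row0, Rm_row1, Rm_row2, Rm_row3, Rm_row4, Rm_row5, Rm_row6, Rm_row7]
  simp (config := { decide := true }) only [dd, if_true, if_false]
  ring

lemma Rm2_row7 (τ : ℝ) (y : Fin 3 → Fin 2) :
    (Rm τ * Rm τ) ![1,1,1] y = 4*τ^2 * dd y ![1,1,1] := by
  rw [Matrix.mul_apply, sum_cfg]
  simp only [Rm_row0, Rm_row1, Rm_row2, Rm_row3, Rm_row4, Rm_row5, Rm_row6, Rm_row7]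
  simp (config := { decide := true }) only [dd, if_true, if_false]
  ring

lemma Rm_cube (τ : ℝ) : Rm τ * Rm τ * Rm τ = (2*τ) • (Rm τ * Rm τ) := by
  ext x y
  rw [Matrix.mul_apply, sum_cfg, Matrix.smul_apply, smul_eq_mul]
  rcases cfg_cases x with rfl|rfl|rfl|rfl|rfl|rfl|rfl|rfl <;>
  · simp only [Rm2_row0, Rm2_row1, Rm2_row2, Rm2_row3, Rm2_row4, Rm2_row5, Rm2_row6, Rm2_row7,
      Rm_row0, Rm_row1, Rm_row2, Rm_row3, Rm_row4, Rm_row5, Rm_row6, Rm_row7]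
    simp (config := { decide := true }) only [dd, if_true, if_false]
    ring

open NormedSpace in
lemma exp_eval (τ t : ℝ) (hτ : 0 < τ) (ht : 0 < t) :
    ∃ S : ℝ, 0 ≤ S ∧ NormedSpace.exp (t • siGen triangle τ)
      = Real.exp (-(2*τ*t)) • (1 + t • Rm τ + S • (Rm τ * Rm τ)) := by
  classical
  refine ⟨∑' n : ℕ, (((n+2).factorial : ℝ)⁻¹ * (t^(n+2) * (2*τ)^n)), ?_, ?_⟩
  · refine tsum_nonneg fun n => ?_
    positivity
  letI : SeminormedRing (Matrix (Fin 3 → Fin 2) (Fin 3 → Fin 2) ℝ) := Matrix.linftyOpSemiNormedRing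
  letI : NormedRing (Matrix (Fin 3 → Fin 2) (Fin 3 → Fin 2) ℝ) := Matrix.linftyOpNormedRing
  letI : NormedAlgebra ℝ (Matrix (Fin 3 → Fin 2) (Fin 3 → Fin 2) ℝ) := Matrix.linftyOpNormedAlgebra
  have hsplit : t • siGen triangle τ
      = (-(2*τ*t)) • (1 : Matrix (Fin 3 → Fin 2) (Fin 3 → Fin 2) ℝ) + t • Rm τ := by
    simp only [Rm, smul_add, smul_smul]
    module
  have hcomm : Commute ((-(2*τ*t)) • (1 : Matrix (Fin 3 → Fin 2) (Fin 3 → Fin 2) ℝ)) (t • Rm τ) :=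
    ((Commute.one_left _).smul_left _).smul_right _
  have h1 : exp ((-(2*τ*t)) • (1 : Matrix (Fin 3 → Fin 2) (Fin 3 → Fin 2) ℝ))
      = Real.exp (-(2*τ*t)) • 1 := by
    rw [← Algebra.algebraMap_eq_smul_one]
    erw [← algebraMap_exp_comm (𝕂 := ℝ) (𝔸 := Matrix (Fin 3 → Fin 2) (Fin 3 → Fin 2) ℝ)]
    rw [Real.exp_eq_exp_ℝ, Algebra.algebraMap_eq_smul_one]
  have hpow : ∀ n : ℕ, Rm τ ^ (n+2) = ((2*τ)^n) • (Rm τ * Rm τ) := by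
    intro n
    induction n with
    | zero => simp [pow_two]
    | succ n ih =>
        rw [pow_succ, ih, smul_mul_assoc, Rm_cube, smul_smul, ← pow_succ]
  have hsummable : Summable (fun n : ℕ => ((n.factorial : ℝ))⁻¹ • (t • Rm τ)^n) :=
    expSeries_summable' (𝕂 := ℝ) _
  have hcoef : Summable (fun n : ℕ => (((n+2).factorial : ℝ)⁻¹ * (t^(n+2) * (2*τ)^n))) := by
    have h4 : Summable (fun n : ℕ => (2*τ*t)^n / n.factorial) :=
      Real.summable_pow_div_factorial _
    refine (((_root_.summable_nat_add_iff 2).2 h4).mul_left ((4*τ^2)⁻¹)).congr fun n => ?_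
    field_simp
    ring
  have h2 : exp (t • Rm τ) = 1 + t • Rm τ
      + (∑' n : ℕ, (((n+2).factorial : ℝ)⁻¹ * (t^(n+2) * (2*τ)^n))) • (Rm τ * Rm τ) := by
    simp only [exp_eq_tsum ℝ]
    rw [← Summable.sum_add_tsum_nat_add 2 hsummable]
    have htail : ∀ n : ℕ, ((n+2).factorial : ℝ)⁻¹ • (t • Rm τ)^(n+2)
        = (((n+2).factorial : ℝ)⁻¹ * (t^(n+2) * (2*τ)^n)) • (Rm τ * Rm τ) := by
      intro n
      rw [smul_pow, hpow, smul_smul, smul_smul]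
      ring_nf
    rw [tsum_congr htail, Summable.tsum_smul_const hcoef]
    norm_num [Finset.sum_range_succ]
  rw [hsplit, Matrix.exp_add_of_commute _ _ hcomm, h1, h2, smul_mul_assoc, one_mul]

lemma siP_vals (τ t : ℝ) (hτ : 0 < τ) (ht : 0 < t) :
    ∃ u v w : ℝ, 0 < u ∧ 0 < v ∧ 0 ≤ w ∧
      siP triangle τ ![1,0,0] t ![0,0,0] = 0 ∧
      siP triangle τ ![1,0,0] t ![1,0,0] = u ∧
      siP triangle τ ![1,0,0] t ![0,1,0] = 0 ∧
      siP triangle τ ![1,0,0] t ![1,1,0] = v ∧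
      siP triangle τ ![1,0,0] t ![0,0,1] = 0 ∧
      siP triangle τ ![1,0,0] t ![1,0,1] = v ∧
      siP triangle τ ![1,0,0] t ![0,1,1] = 0 ∧
      siP triangle τ ![1,0,0] t ![1,1,1] = w := by
  obtain ⟨S, hS, hkey⟩ := exp_eval τ t hτ ht
  refine ⟨Real.exp (-(2*τ*t)), Real.exp (-(2*τ*t)) * (t*τ),
    Real.exp (-(2*τ*t)) * (S*(4*τ^2)), Real.exp_pos _, by positivity, by positivity, ?_⟩
  have hu := Real.exp_pos (-(2*τ*t))
  refine ⟨?_, ?_, ?_, ?_, ?_, ?_, ?_, ?_⟩ <;>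
  · rw [siP, hkey, Matrix.smul_apply, Matrix.add_apply, Matrix.add_apply, Matrix.smul_apply,
      Matrix.smul_apply, Matrix.one_apply, Rm_row1, Rm2_row1]
    simp (config := { decide := true }) only [dd, if_true, if_false, smul_eq_mul]
    ring

/-- For Markovian SI dynamics on the closed triangle started from `(I,S,S)`, the one-step
maximum-entropy closure is exact:
`P₁₂₃(A,B,C) = P₁₂(A,B)·P₂₃(B,C)·P₁₃(A,C) / (P₂(B) · ∑_b P₁₂(A,b)·P₂₃(b,C)/P₂(b))`,
with Lean's convention `x/0 = 0`. -/
theorem si_triangle_oneStepME_exact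
    (τ : ℝ) (hτ : 0 < τ) (A B C : Fin 2) (t : ℝ) (ht : 0 < t) :
    siP3 triangle τ ![1, 0, 0] 0 1 2 A B C t
      = siP2 triangle τ ![1, 0, 0] 0 1 A B t * siP2 triangle τ ![1, 0, 0] 1 2 B C t
          * siP2 triangle τ ![1, 0, 0] 0 2 A C t
        / (siP1 triangle τ ![1, 0, 0] 1 B t
            * ∑ b : Fin 2, siP2 triangle τ ![1, 0, 0] 0 1 A b t
                * siP2 triangle τ ![1, 0, 0] 1 2 b C t / siP1 triangle τ ![1, 0, 0] 1 b t) := by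
  obtain ⟨u, v, w, hu, hv, hw, h000, h100, h010, h110, h001, h101, h011, h111⟩ :=
    siP_vals τ t hτ ht
  have huv : u + v ≠ 0 := by positivity
  have hvw : v + w ≠ 0 := by positivity
  have hP1 : ∀ b, siP1 triangle τ ![1,0,0] 1 b t = if b = 0 then u + v else v + w := by
    intro b
    rw [siP1, Finset.sum_filter, sum_cfg]
    fin_cases b <;>
    · simp (config := { decide := true }) only [if_true, if_false]
      simp only [h000, h100, h010, h110, h001, h101, h011, h111]
      ring
  have hP2a : ∀ a b, siP2 triangle τ ![1,0,0] 0 1 a b t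
      = if a = 1 then (if b = 0 then u + v else v + w) else 0 := by
    intro a b
    rw [siP2, Finset.sum_filter, sum_cfg]
    fin_cases a <;> fin_cases b <;>
    · simp (config := { decide := true }) only [if_true, if_false]
      simp only [h000, h100, h010, h110, h001, h101, h011, h111]
      ring
  have hP2b : ∀ b c, siP2 triangle τ ![1,0,0] 1 2 b c t
      = if b = 0 then (if c = 0 then u else v) else (if c = 0 then v else w) := by
    intro b c
    rw [siP2, Finset.sum_filter, sum_cfg]
    fin_cases b <;> fin_cases c <;>
    · simp (config := { decide := true }) only [if_true, if_false]
      simp only [h000, h100, h010, h110, h001, h101, h011, h111]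
      ring
  have hP2c : ∀ a c, siP2 triangle τ ![1,0,0] 0 2 a c t
      = if a = 1 then (if c = 0 then u + v else v + w) else 0 := by
    intro a c
    rw [siP2, Finset.sum_filter, sum_cfg]
    fin_cases a <;> fin_cases c <;>
    · simp (config := { decide := true }) only [if_true, if_false]
      simp only [h000, h100, h010, h110, h001, h101, h011, h111]
      ring
  have hP3 : ∀ a b c, siP3 triangle τ ![1,0,0] 0 1 2 a b c t
      = if a = 1 then (if b = 0 then (if c = 0 then u else v)
          else (if c = 0 then v else w)) else 0 := by
    intro a b c
    rw [siP3, Finset.sum_filter, sum_cfg]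
    fin_cases a <;> fin_cases b <;> fin_cases c <;>
    · simp (config := { decide := true }) only [if_true, if_false]
      simp only [h000, h100, h010, h110, h001, h101, h011, h111]
      ring
  rw [Fin.sum_univ_two]
  simp only [hP3, hP2a, hP2b, hP2c, hP1]
  fin_cases A <;> fin_cases B <;> fin_cases C <;>
    simp (config := { decide := true }) only [if_true, if_false] <;>
  · first
    | (norm_num; done)
    | (rw [mul_div_cancel_left₀ _ huv, mul_div_cancel_left₀ _ hvw]
       rw [div_eq_iff (by first
            | exact mul_ne_zero huv huv
            | exact mul_ne_zero huv hvw
            | exact mul_ne_zero hvw huv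
            | exact mul_ne_zero hvw hvw)]
       ring)
    | (field_simp <;>
       ring)
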